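/- arXiv:2409.13454 — 2 statements merged into one kernel-verified Lean document; each statement's English description precedes it below -/
import Mathlib

section
/- Let A ∈ ℝ^{s×d} be nonzero, p(x) = Σ_{i=0}^{k} c_i x^i a polynomial with c_i ≥ 0 for all i and c_0 > 0, and P = p(AᵀA). Then the spectral norm satisfies ‖P⁻¹AᵀA‖ ≤ (c_1 + c_0‖A‖⁻²)⁻¹. -/
open Matrix Polynomial
open scoped Matrix.Norms.L2Operator

lemma diag_norm_le {d : ℕ} (v : Fin d → ℝ) {c : ℝ} (hc : 0 ≤ c) (h : ∀ i, |v i| ≤ c) :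
    ‖diagonal v‖ ≤ c := by
  rw [Matrix.l2_opNorm_def]
  apply ContinuousLinearMap.opNorm_le_bound _ hc
  intro x
  simp only [LinearEquiv.trans_apply, LinearMap.coe_toContinuousLinearMap']
  have hx : ∀ y : EuclideanSpace ℝ (Fin d), ‖y‖ = Real.sqrt (∑ i, ‖y i‖ ^ 2) :=
    fun y => EuclideanSpace.norm_eq y
  rw [hx, hx]
  have key : ∀ i, ‖(toEuclideanLin (diagonal v) x) i‖ ^ 2 ≤ c ^ 2 * ‖x i‖ ^ 2 := by
    intro i
    rw [toEuclideanLin_apply]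
    show ‖(diagonal v *ᵥ (WithLp.equiv _ _) x) i‖ ^ 2 ≤ _
    rw [mulVec_diagonal]
    have : |v i * x i| ≤ c * |x i| :=
      (abs_mul _ _).le.trans (mul_le_mul_of_nonneg_right (h i) (abs_nonneg _))
    calc ‖v i * x i‖ ^ 2 ≤ (c * |x i|) ^ 2 := by
          rw [Real.norm_eq_abs]; exact pow_le_pow_left₀ (abs_nonneg _) this 2
      _ = c ^ 2 * ‖x i‖ ^ 2 := by rw [mul_pow, Real.norm_eq_abs, sq_abs]
  calc Real.sqrt (∑ i, ‖(toEuclideanLin (diagonal v) x) i‖ ^ 2)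
      ≤ Real.sqrt (∑ i, c ^ 2 * ‖x i‖ ^ 2) :=
        Real.sqrt_le_sqrt (Finset.sum_le_sum fun i _ => key i)
    _ = c * Real.sqrt (∑ i, ‖x i‖ ^ 2) := by
        rw [← Finset.mul_sum, Real.sqrt_mul (sq_nonneg c), Real.sqrt_sq hc]

lemma eval_lower {p : Polynomial ℝ} (hcoeff : ∀ i, 0 ≤ p.coeff i) {x : ℝ} (hx : 0 ≤ x) :
    p.coeff 0 + p.coeff 1 * x ≤ p.eval x := by
  have hn : p.natDegree < max (p.natDegree + 1) 2 :=
    lt_of_lt_of_le (Nat.lt_succ_self _) (le_max_left _ _)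
  rw [Polynomial.eval_eq_sum_range' hn]
  have h2 : (Finset.range 2) ⊆ Finset.range (max (p.natDegree + 1) 2) :=
    Finset.range_subset_range.mpr (le_max_right _ _)
  calc p.coeff 0 + p.coeff 1 * x = ∑ i ∈ Finset.range 2, p.coeff i * x ^ i := by
        rw [Finset.sum_range_succ, Finset.sum_range_one]; ring
    _ ≤ _ := Finset.sum_le_sum_of_subset_of_nonneg h2
        (fun i _ _ => mul_nonneg (hcoeff i) (pow_nonneg hx i))

lemma scalar_bound {c0 c1 x N : ℝ} (hc0 : 0 < c0) (hc1 : 0 ≤ c1) (hx : 0 ≤ x)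
    (hxN : x ≤ N) (hN : 0 < N) {q : ℝ} (hq : c0 + c1 * x ≤ q) :
    q⁻¹ * x ≤ (c1 + c0 * N⁻¹)⁻¹ := by
  have hden : 0 < c0 + c1 * x := by positivity
  have hq0 : 0 < q := lt_of_lt_of_le hden hq
  have h1 : q⁻¹ * x ≤ x / (c0 + c1 * x) := by
    rw [mul_comm, ← div_eq_mul_inv]
    gcongr
  have h2 : x / (c0 + c1 * x) ≤ N / (c0 + c1 * N) := by
    rw [div_le_div_iff₀ hden (by positivity)]
    nlinarith
  have h3 : N / (c0 + c1 * N) = (c1 + c0 * N⁻¹)⁻¹ := by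
    have hne : (c1 + c0 * N⁻¹) = (c0 + c1 * N) / N := by field_simp; ring
    rw [hne, inv_div]
  linarith [h2.trans_eq h3]

theorem stmt_2 (s d : ℕ) (A : Matrix (Fin s) (Fin d) ℝ) (hA : A ≠ 0)
    (p : Polynomial ℝ) (hcoeff : ∀ i, 0 ≤ p.coeff i) (hc0 : 0 < p.coeff 0)
    (P : Matrix (Fin d) (Fin d) ℝ) (hP : P = Polynomial.aeval (Aᵀ * A) p) :
    ‖P⁻¹ * Aᵀ * A‖ ≤ (p.coeff 1 + p.coeff 0 * ‖A‖⁻¹ ^ 2)⁻¹ := by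
  classical
  rcases Nat.eq_zero_or_pos d with rfl | hd
  · exact absurd (by ext i j; exact j.elim0) hA
  haveI : Nonempty (Fin d) := ⟨⟨0, hd⟩⟩
  haveI : Nontrivial (Matrix (Fin d) (Fin d) ℝ) := inferInstance
  have hAT : Aᴴ = Aᵀ := rfl
  have hHher : (Aᵀ * A).IsHermitian := by
    rw [← hAT]; exact Matrix.isHermitian_conjTranspose_mul_self A
  have hHpsd : (Aᵀ * A).PosSemidef := by
    rw [← hAT]; exact Matrix.posSemidef_conjTranspose_mul_self A
  set μ : Fin d → ℝ := hHher.eigenvalues with hμ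
  set U : Matrix.unitaryGroup (Fin d) ℝ := hHher.eigenvectorUnitary with hUdef
  have hsU : (star (U : Matrix (Fin d) (Fin d) ℝ)) * U = 1 := Unitary.coe_star_mul_self U
  have hUs : (U : Matrix (Fin d) (Fin d) ℝ) * star (U : Matrix (Fin d) (Fin d) ℝ) = 1 :=
    Unitary.coe_mul_star_self U
  have hmul : ∀ X Y : Matrix (Fin d) (Fin d) ℝ,
      ((U : Matrix (Fin d) (Fin d) ℝ) * X * star (U : Matrix (Fin d) (Fin d) ℝ)) *
      ((U : Matrix (Fin d) (Fin d) ℝ) * Y * star (U : Matrix (Fin d) (Fin d) ℝ)) =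
      (U : Matrix (Fin d) (Fin d) ℝ) * (X * Y) * star (U : Matrix (Fin d) (Fin d) ℝ) := by
    intro X Y
    simp only [mul_assoc]
    rw [← mul_assoc (star (U : Matrix (Fin d) (Fin d) ℝ)) (U : Matrix (Fin d) (Fin d) ℝ),
      hsU, one_mul]
  have hspec : Aᵀ * A = (U : Matrix (Fin d) (Fin d) ℝ) * diagonal μ *
      star (U : Matrix (Fin d) (Fin d) ℝ) := by
    have := hHher.spectral_theorem
    rw [this, Unitary.conjStarAlgAut_apply]; rfl
  -- conjugation as an algebra hom
  let f : Matrix (Fin d) (Fin d) ℝ →ₐ[ℝ] Matrix (Fin d) (Fin d) ℝ :=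
    { toFun := fun X => (U : Matrix (Fin d) (Fin d) ℝ) * X * star (U : Matrix (Fin d) (Fin d) ℝ)
      map_one' := by show (U : Matrix (Fin d) (Fin d) ℝ) * 1 * star (U : Matrix (Fin d) (Fin d) ℝ) = 1; rw [mul_one, hUs]
      map_mul' := fun X Y => (hmul X Y).symm
      map_zero' := by simp
      map_add' := fun X Y => by noncomm_ring
      commutes' := fun r => by
        simp only [Algebra.algebraMap_eq_smul_one, mul_smul_comm, smul_mul_assoc, mul_one, hUs] }
  have hPdiag : P = (U : Matrix (Fin d) (Fin d) ℝ) * diagonal (fun i => p.eval (μ i)) *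
      star (U : Matrix (Fin d) (Fin d) ℝ) := by
    rw [hP, hspec]
    have h1 : Polynomial.aeval ((U : Matrix (Fin d) (Fin d) ℝ) * diagonal μ *
        star (U : Matrix (Fin d) (Fin d) ℝ)) p = f (Polynomial.aeval (diagonal μ) p) :=
      Polynomial.aeval_algHom_apply f (diagonal μ) p
    have h2 : Polynomial.aeval (diagonal μ) p = diagonal (fun i => p.eval (μ i)) := by
      have h3 : Polynomial.aeval ((Matrix.diagonalAlgHom (R := ℝ) (n := Fin d) (α := ℝ)) μ) p =
          (Matrix.diagonalAlgHom (R := ℝ) (n := Fin d) (α := ℝ)) (Polynomial.aeval μ p) :=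
        Polynomial.aeval_algHom_apply _ μ p
      simp only [Matrix.diagonalAlgHom_apply] at h3
      have h5 : (Polynomial.aeval μ p : Fin d → ℝ) = fun i => p.eval (μ i) := by
        funext i
        have h4 : Polynomial.aeval (μ i) p = (Pi.evalAlgHom ℝ (fun _ => ℝ) i) (Polynomial.aeval μ p) :=
          Polynomial.aeval_algHom_apply (Pi.evalAlgHom ℝ (fun _ => ℝ) i) μ p
        simp only [Pi.evalAlgHom_apply] at h4
        rw [← h4]; simp [Polynomial.aeval_def, Polynomial.eval₂_eq_eval_map, Algebra.algebraMap_self]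
      rw [h3, h5]
    rw [h1, h2]
    rfl
  have hq : ∀ i, p.coeff 0 + p.coeff 1 * μ i ≤ p.eval (μ i) :=
    fun i => eval_lower hcoeff (hHpsd.eigenvalues_nonneg i)
  have hqpos : ∀ i, 0 < p.eval (μ i) := fun i =>
    lt_of_lt_of_le (by have := hHpsd.eigenvalues_nonneg i; have := hcoeff 1; nlinarith) (hq i)
  have hPinv : P⁻¹ = (U : Matrix (Fin d) (Fin d) ℝ) * diagonal (fun i => (p.eval (μ i))⁻¹) *
      star (U : Matrix (Fin d) (Fin d) ℝ) := by
    apply Matrix.inv_eq_right_inv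
    rw [hPdiag, hmul, diagonal_mul_diagonal]
    have : (fun i => p.eval (μ i) * (p.eval (μ i))⁻¹) = fun _ : Fin d => (1 : ℝ) :=
      funext fun i => mul_inv_cancel₀ (hqpos i).ne'
    rw [this, diagonal_one, mul_one, hUs]
  have hfinal : P⁻¹ * Aᵀ * A = (U : Matrix (Fin d) (Fin d) ℝ) *
      diagonal (fun i => (p.eval (μ i))⁻¹ * μ i) * star (U : Matrix (Fin d) (Fin d) ℝ) := by
    rw [Matrix.mul_assoc P⁻¹ Aᵀ A, hPinv, hspec, hmul, diagonal_mul_diagonal]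
  rw [hfinal, mul_assoc, CStarRing.norm_coe_unitary_mul U, ← Unitary.coe_star,
    CStarRing.norm_mul_coe_unitary]
  -- now bound the diagonal
  have hApos : 0 < ‖A‖ := norm_pos_iff.mpr hA
  have hN : 0 < ‖A‖ ^ 2 := by positivity
  have hRHS : (p.coeff 1 + p.coeff 0 * ‖A‖⁻¹ ^ 2)⁻¹ = (p.coeff 1 + p.coeff 0 * (‖A‖ ^ 2)⁻¹)⁻¹ := by
    rw [inv_pow]
  rw [hRHS]
  have hcpos : 0 < p.coeff 1 + p.coeff 0 * (‖A‖ ^ 2)⁻¹ := by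
    have := hcoeff 1; positivity
  apply diag_norm_le _ (inv_nonneg.mpr hcpos.le)
  intro i
  have hμN : μ i ≤ ‖A‖ ^ 2 := by
    have hmem := hHher.eigenvalues_mem_spectrum_real i
    have := spectrum.norm_le_norm_of_mem hmem
    have hnorm : ‖Aᵀ * A‖ = ‖A‖ * ‖A‖ := by
      rw [← hAT]; exact Matrix.l2_opNorm_conjTranspose_mul_self A
    rw [Real.norm_eq_abs, hnorm] at this
    calc μ i ≤ |μ i| := le_abs_self _
      _ ≤ ‖A‖ * ‖A‖ := this
      _ = ‖A‖ ^ 2 := (sq ‖A‖).symm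
  rw [abs_of_nonneg (mul_nonneg (inv_nonneg.mpr (hqpos i).le) (hHpsd.eigenvalues_nonneg i))]
  exact scalar_bound hc0 (hcoeff 1) (hHpsd.eigenvalues_nonneg i) hμN hN (hq i)
end

section
/- Let h : ℝ^{d'} → ℝ ∪ {∞} be proper, convex, lower semicontinuous, W ∈ ℝ^{d'×d}, R ∈ ℝ^{d×d} invertible, W̃ = WR⁻¹, and α > 0. Then for all z ∈ ℝ^d, prox_{α h∘W̃}(z) = R · prox^{RᵀR}_{α h∘W}(R⁻¹z), where prox^{M}_{φ}(a) = argmin_u φ(u) + (1/(2α))‖u−a‖²_M is the proximal operator in the metric induced by the symmetric positive definite matrix M = RᵀR, with ‖v‖²_M = vᵀMv. -/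
open Matrix

theorem stmt_4 (d d' : ℕ) (h : (Fin d' → ℝ) → EReal)
    (hproper_top : ∃ v, h v ≠ ⊤) (hproper_bot : ∀ v, h v ≠ ⊥)
    (hconvex : ∀ x y : Fin d' → ℝ, ∀ t : ℝ, 0 ≤ t → t ≤ 1 →
      h (t • x + (1 - t) • y) ≤ ((t : ℝ) : EReal) * h x + (((1 - t : ℝ)) : EReal) * h y)
    (hlsc : LowerSemicontinuous h)
    (W : Matrix (Fin d') (Fin d) ℝ)
    (R : Matrix (Fin d) (Fin d) ℝ) (hR : IsUnit R.det)
    (α : ℝ) (hα : 0 < α) (z : Fin d → ℝ)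
    -- prox objective of α • (h ∘ W̃), with W̃ = W R⁻¹, at the point z
    (G : (Fin d → ℝ) → EReal)
    (hG : G = fun u => h ((W * R⁻¹) *ᵥ u) +
      (((1 / (2 * α)) * ((u - z) ⬝ᵥ (u - z)) : ℝ) : EReal))
    -- prox objective of α • (h ∘ W) in the metric induced by M = RᵀR, at the point R⁻¹ z
    (H : (Fin d → ℝ) → EReal)
    (hH : H = fun u => h (W *ᵥ u) +
      (((1 / (2 * α)) *
        ((u - R⁻¹ *ᵥ z) ⬝ᵥ ((Rᵀ * R) *ᵥ (u - R⁻¹ *ᵥ z))) : ℝ) : EReal)) :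
    -- prox_{α h∘W̃}(z) = R · prox^{RᵀR}_{α h∘W}(R⁻¹ z), as sets of minimizers
    {x | ∀ y, G x ≤ G y} = (fun u => R *ᵥ u) '' {x | ∀ y, H x ≤ H y} := by
  have hRR : R⁻¹ * R = 1 := Matrix.nonsing_inv_mul R hR
  have hRR' : R * R⁻¹ = 1 := Matrix.mul_nonsing_inv R hR
  have hcanc : ∀ v : Fin d → ℝ, R *ᵥ (R⁻¹ *ᵥ v) = v := by
    intro v; rw [Matrix.mulVec_mulVec, hRR', Matrix.one_mulVec]
  have hcanc' : ∀ v : Fin d → ℝ, R⁻¹ *ᵥ (R *ᵥ v) = v := by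
    intro v; rw [Matrix.mulVec_mulVec, hRR, Matrix.one_mulVec]
  have key : ∀ u, H u = G (R *ᵥ u) := by
    intro u
    rw [hG, hH]
    simp only
    have h1 : (W * R⁻¹) *ᵥ (R *ᵥ u) = W *ᵥ u := by
      rw [Matrix.mulVec_mulVec, Matrix.mul_assoc, hRR, Matrix.mul_one]
    have h2 : R *ᵥ u - z = R *ᵥ (u - R⁻¹ *ᵥ z) := by
      rw [Matrix.mulVec_sub, hcanc]
    have h3 : (R *ᵥ u - z) ⬝ᵥ (R *ᵥ u - z)
        = (u - R⁻¹ *ᵥ z) ⬝ᵥ ((Rᵀ * R) *ᵥ (u - R⁻¹ *ᵥ z)) := by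
      rw [h2]
      conv_rhs => rw [← Matrix.mulVec_mulVec, Matrix.dotProduct_mulVec,
        Matrix.vecMul_transpose]
    rw [h1, h3]
  ext x
  simp only [Set.mem_setOf_eq, Set.mem_image]
  constructor
  · intro hx
    refine ⟨R⁻¹ *ᵥ x, ?_, hcanc x⟩
    intro y
    rw [key, key, hcanc]
    exact hx _
  · rintro ⟨u, hu, rfl⟩
    intro y
    rw [← key]
    have : G y = H (R⁻¹ *ᵥ y) := by rw [key, hcanc]
    rw [this]
    exact hu _
end
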